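/- Let (X,d) be a compact metric space, (p_k) a sequence of positive integers, and (A_i), (B_i) decreasing sequences of nonempty compact subsets of X with ⋂_i A_i = {a} and ⋂_i B_i = {b}, where a ≠ b. Suppose that for every sequence c = (C_1, C_2, …) with each C_k ∈ {A_k, B_k}, there exists x_c ∈ X such that f_1^{p_k}(x_c) ∈ C_k for all k ≥ 1. Then (X, f_{1,∞}) is uniformly distributively chaotic in the sequence (p_k). -/

import Mathlib

open Filter
open scoped Classical

variable {X : Type*}

/-- `orb f n = f_n ∘ ⋯ ∘ f_1` (0-based: `f k` is the `(k+1)`-st map). -/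
def orb (f : ℕ → X → X) : ℕ → X → X
  | 0 => id
  | n + 1 => f n ∘ orb f n

/-- Lower distributional density along the time sequence `p`. -/
noncomputable def phiLow [MetricSpace X] (f : ℕ → X → X) (p : ℕ → ℕ) (x y : X) (t : ℝ) : ℝ :=
  liminf (fun n =>
    (((Finset.range n).filter
      (fun i => dist (orb f (p i) x) (orb f (p i) y) < t)).card : ℝ) / n) atTop

/-- Upper distributional density along the time sequence `p`. -/
noncomputable def phiUpp [MetricSpace X] (f : ℕ → X → X) (p : ℕ → ℕ) (x y : X) (t : ℝ) : ℝ :=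
  limsup (fun n =>
    (((Finset.range n).filter
      (fun i => dist (orb f (p i) x) (orb f (p i) y) < t)).card : ℝ) / n) atTop

/-- Uniform distributional chaos in the sequence `p`. -/
def UnifDistChaosInSeq [MetricSpace X] (f : ℕ → X → X) (p : ℕ → ℕ) : Prop :=
  ∃ S : Set X, ¬S.Countable ∧ ∃ ε > 0, ∀ x ∈ S, ∀ y ∈ S, x ≠ y →
    phiLow f p x y ε = 0 ∧ ∀ t : ℝ, 0 < t → phiUpp f p x y t = 1

namespace Stmt11Aux

/-- Block boundaries: `NN j = (j+1)!`. -/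
def NN (j : ℕ) : ℕ := (j + 1).factorial

lemma NN_pos (j : ℕ) : 0 < NN j := Nat.factorial_pos _

lemma NN_succ (j : ℕ) : NN (j + 1) = (j + 2) * NN j := rfl

lemma lt_NN (j : ℕ) : j < NN j :=
  lt_of_lt_of_le (Nat.lt_succ_self j) (Nat.self_le_factorial _)

lemma NN_mono : StrictMono NN := by
  apply strictMono_nat_of_lt_succ
  intro n
  rw [NN_succ]
  have := NN_pos n
  nlinarith

/-- Block index of `k`. -/
def blk (k : ℕ) : ℕ := Nat.findGreatest (fun j => NN j ≤ k) k

lemma blk_eq {j k : ℕ} (h1 : NN j ≤ k) (h2 : k < NN (j + 1)) : blk k = j := by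
  have hjk : j ≤ k := le_of_lt (lt_of_lt_of_le (lt_NN j) h1)
  have hge : j ≤ blk k := Nat.le_findGreatest hjk h1
  have hle : blk k ≤ j := by
    by_contra h
    push_neg at h
    have hspec : NN (blk k) ≤ k :=
      Nat.findGreatest_spec (P := fun j => NN j ≤ k) (m := j) hjk h1
    have : NN (j + 1) ≤ NN (blk k) := NN_mono.monotone h
    omega
  omega

/-- The value of the symbol sequence on block `j`. -/
def val (r : ℕ → Bool) (j : ℕ) : Bool :=
  if j % 2 = 0 then true else r (Nat.unpair (j / 2)).1

/-- The symbol sequence of `r`. -/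
def cseq (r : ℕ → Bool) (k : ℕ) : Bool := val r (blk k)

lemma cseq_even {r : ℕ → Bool} {j k : ℕ} (hj : j % 2 = 0)
    (h1 : NN j ≤ k) (h2 : k < NN (j + 1)) : cseq r k = true := by
  rw [cseq, blk_eq h1 h2, val, if_pos hj]

lemma cseq_odd {r : ℕ → Bool} {n m k : ℕ}
    (h1 : NN (2 * Nat.pair n m + 1) ≤ k) (h2 : k < NN (2 * Nat.pair n m + 1 + 1)) :
    cseq r k = r n := by
  rw [cseq, blk_eq h1 h2, val, if_neg (by omega)]
  have : (2 * Nat.pair n m + 1) / 2 = Nat.pair n m := by omega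
  rw [this, Nat.unpair_pair]

lemma not_countable_bool : ¬ Countable (ℕ → Bool) := by
  intro h
  obtain ⟨g, hg⟩ := countable_iff_exists_injective (ℕ → Bool) |>.mp h
  have hinj : Function.Injective (fun s : Set ℕ => fun n => decide (n ∈ s)) := by
    intro s t h
    ext n
    have := congrFun h n
    simpa using this
  exact Function.cantor_injective (g ∘ fun s : Set ℕ => fun n => decide (n ∈ s))
    (hg.comp hinj)

/-- Decreasing compact sets with intersection `{a}` are eventually inside any
open neighborhood of `a`. -/
lemma eventually_subset {X : Type*} [MetricSpace X] {C : ℕ → Set X}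
    (hC : Antitone C) (hc : ∀ i, IsCompact (C i))
    {a : X} (hI : ⋂ i, C i = {a}) {U : Set X} (hU : IsOpen U) (haU : a ∈ U) :
    ∃ K, ∀ k ≥ K, C k ⊆ U := by
  by_contra h
  push_neg at h
  have hDne : ∀ k, (C k ∩ Uᶜ).Nonempty := by
    intro k
    obtain ⟨k', hk', hk'U⟩ := h k
    obtain ⟨z, hz, hzU⟩ := Set.not_subset.mp hk'U
    exact ⟨z, hC hk' hz, hzU⟩
  have hDc : ∀ k, IsCompact (C k ∩ Uᶜ) := fun k =>
    (hc k).inter_right hU.isClosed_compl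
  have hDcl : ∀ k, IsClosed (C k ∩ Uᶜ) := fun k =>
    ((hc k).isClosed).inter hU.isClosed_compl
  have hdir : Directed (fun x1 x2 : Set X => x1 ⊇ x2) (fun k => C k ∩ Uᶜ) := by
    intro i j
    exact ⟨max i j, Set.inter_subset_inter_left _ (hC (le_max_left i j)),
      Set.inter_subset_inter_left _ (hC (le_max_right i j))⟩
  obtain ⟨z, hz⟩ := IsCompact.nonempty_iInter_of_directed_nonempty_isCompact_isClosed
    _ hdir hDne hDc hDcl
  simp only [Set.mem_iInter, Set.mem_inter_iff] at hz
  have hzI : z ∈ ⋂ i, C i := Set.mem_iInter.mpr (fun i => (hz i).1)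
  rw [hI] at hzI
  have : z = a := Set.mem_singleton_iff.mp hzI
  exact (hz 0).2 (this ▸ haU)

end Stmt11Aux

open Stmt11Aux

theorem stmt_11 [MetricSpace X] [CompactSpace X] (f : ℕ → X → X)
    (hf : ∀ n, Continuous (f n)) (p : ℕ → ℕ) (hp : ∀ k, 0 < p k)
    (A B : ℕ → Set X) (hA : Antitone A) (hB : Antitone B)
    (hAne : ∀ i, (A i).Nonempty) (hBne : ∀ i, (B i).Nonempty)
    (hAc : ∀ i, IsCompact (A i)) (hBc : ∀ i, IsCompact (B i))
    (a b : X) (hab : a ≠ b) (hIA : ⋂ i, A i = {a}) (hIB : ⋂ i, B i = {b})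
    (hsel : ∀ c : ℕ → Bool, ∃ x : X, ∀ k ≥ 1,
      orb f (p k) x ∈ (if c k then A k else B k)) :
    UnifDistChaosInSeq f p := by
  classical
  have hd0 : 0 < dist a b := dist_pos.mpr hab
  set ε : ℝ := dist a b / 4 with hεdef
  have hε0 : 0 < ε := by positivity
  -- select points
  choose x hx using fun r : ℕ → Bool => hsel (cseq r)
  have hxA : ∀ (r : ℕ → Bool) (k : ℕ), 1 ≤ k → cseq r k = true →
      orb f (p k) (x r) ∈ A k := by
    intro r k hk h
    have := hx r k hk
    simpa [h] using this
  have hxB : ∀ (r : ℕ → Bool) (k : ℕ), 1 ≤ k → cseq r k = false →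
      orb f (p k) (x r) ∈ B k := by
    intro r k hk h
    have := hx r k hk
    simpa [h] using this
  -- eventual separation of A k and B k
  obtain ⟨K₁, hK₁⟩ := eventually_subset hA hAc hIA Metric.isOpen_ball
    (Metric.mem_ball_self hε0)
  obtain ⟨K₂, hK₂⟩ := eventually_subset hB hBc hIB Metric.isOpen_ball
    (Metric.mem_ball_self hε0)
  set K₀ : ℕ := max K₁ K₂ with hK₀def
  have far : ∀ k, K₀ ≤ k → ∀ u ∈ A k, ∀ v ∈ B k, ¬ dist u v < ε := by
    intro k hk u hu v hv hlt
    have h1 : dist u a < ε := by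
      have := hK₁ k (le_trans (le_max_left _ _) hk) hu
      simpa [Metric.mem_ball] using this
    have h2 : dist v b < ε := by
      have := hK₂ k (le_trans (le_max_right _ _) hk) hv
      simpa [Metric.mem_ball] using this
    have htr : dist a b ≤ dist a u + dist u v + dist v b := dist_triangle4 a u v b
    rw [dist_comm a u] at htr
    rw [hεdef] at h1 h2 hlt
    linarith
  -- injectivity of the selection
  have hxinj : Function.Injective x := by
    intro r r' hrr
    by_contra hne'
    obtain ⟨n₀, hn₀⟩ := Function.ne_iff.mp hne'
    set j := 2 * Nat.pair n₀ K₀ + 1 with hjdef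
    have hjK : K₀ ≤ j := by have := Nat.right_le_pair n₀ K₀; omega
    set k := NN j with hkdef
    have hk1 : 1 ≤ k := NN_pos j
    have hkj : j ≤ k := le_of_lt (lt_NN j)
    have hklt : k < NN (j + 1) := NN_mono (Nat.lt_succ_self j)
    have hc1 : cseq r k = r n₀ := cseq_odd le_rfl hklt
    have hc2 : cseq r' k = r' n₀ := cseq_odd le_rfl hklt
    have hkK : K₀ ≤ k := le_trans hjK hkj
    cases hb1 : r n₀ <;> cases hb2 : r' n₀
    · rw [hb1, hb2] at hn₀; exact hn₀ rfl
    · have m1 := hxB r k hk1 (hc1.trans hb1)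
      have m2 := hxA r' k hk1 (hc2.trans hb2)
      rw [hrr] at m1
      exact far k hkK _ m2 _ m1 (by rw [dist_self]; exact hε0)
    · have m1 := hxA r k hk1 (hc1.trans hb1)
      have m2 := hxB r' k hk1 (hc2.trans hb2)
      rw [hrr] at m1
      exact far k hkK _ m1 _ m2 (by rw [dist_self]; exact hε0)
    · rw [hb1, hb2] at hn₀; exact hn₀ rfl
  refine ⟨Set.range x, ?_, ε, hε0, ?_⟩
  · intro hcnt
    have : Countable (Set.range x) := hcnt.to_subtype
    have hinj2 : Function.Injective
        (fun r : ℕ → Bool => (⟨x r, Set.mem_range_self r⟩ : Set.range x)) := by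
      intro r r' h
      exact hxinj (congrArg Subtype.val h)
    exact not_countable_bool hinj2.countable
  rintro _ ⟨r, rfl⟩ _ ⟨r', rfl⟩ hxy
  have hrr : r ≠ r' := fun h => hxy (by rw [h])
  obtain ⟨n₀, hn₀⟩ := Function.ne_iff.mp hrr
  -- the density sequence
  set cnt : ℝ → ℕ → ℝ := fun t n =>
    (((Finset.range n).filter
      (fun i => dist (orb f (p i) (x r)) (orb f (p i) (x r')) < t)).card : ℝ) / n
    with hcnt_def
  have h0 : ∀ t n, 0 ≤ cnt t n := fun t n => by positivity
  have h1 : ∀ t n, cnt t n ≤ 1 := by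
    intro t n
    apply div_le_one_of_le₀ _ (Nat.cast_nonneg n)
    have := Finset.card_filter_le (Finset.range n)
      (fun i => dist (orb f (p i) (x r)) (orb f (p i) (x r')) < t)
    rw [Finset.card_range] at this
    exact_mod_cast this
  have hbddle : ∀ t, IsBoundedUnder (· ≤ ·) atTop (cnt t) := fun t =>
    isBoundedUnder_of ⟨1, fun n => h1 t n⟩
  have hbddge : ∀ t, IsBoundedUnder (· ≥ ·) atTop (cnt t) := fun t =>
    isBoundedUnder_of ⟨0, fun n => h0 t n⟩
  constructor
  · -- phiLow = 0
    rw [phiLow]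
    refine le_antisymm ?_ ?_
    · -- liminf ≤ 0
      refine le_of_forall_pos_le_add ?_
      intro δ hδ
      rw [zero_add]
      refine liminf_le_of_frequently_le ?_ (hbddge ε)
      rw [frequently_atTop]
      intro M
      obtain ⟨m0, hm0⟩ := exists_nat_gt (1 / δ)
      set m : ℕ := max (max K₀ M) m0 with hmdef
      set j : ℕ := 2 * Nat.pair n₀ m + 1 with hjdef
      have hmj : m ≤ j := by have := Nat.right_le_pair n₀ m; omega
      have hjK : K₀ ≤ j := le_trans (le_trans (le_max_left _ _) (le_max_left _ _)) hmj
      have hjM : M ≤ j := le_trans (le_trans (le_max_right _ _) (le_max_left _ _)) hmj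
      have hjm0 : m0 ≤ j := le_trans (le_max_right _ _) hmj
      refine ⟨NN (j + 1), ?_, ?_⟩
      · calc M ≤ j := hjM
          _ ≤ NN (j+1) := le_of_lt (lt_of_le_of_lt (Nat.le_succ j) (lt_NN (j+1)))
      · -- the count estimate
        have hsub : (Finset.range (NN (j+1))).filter
            (fun i => dist (orb f (p i) (x r)) (orb f (p i) (x r')) < ε)
            ⊆ Finset.range (NN j) := by
          intro i hi
          simp only [Finset.mem_filter, Finset.mem_range] at hi ⊢
          by_contra hge
          push_neg at hge
          have hc1 : cseq r i = r n₀ := cseq_odd hge hi.1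
          have hc2 : cseq r' i = r' n₀ := cseq_odd hge hi.1
          have hi1 : 1 ≤ i := le_trans (NN_pos j) hge
          have hiK : K₀ ≤ i := le_trans hjK (le_trans (le_of_lt (lt_NN j)) hge)
          cases hb1 : r n₀ <;> cases hb2 : r' n₀
          · rw [hb1, hb2] at hn₀; exact hn₀ rfl
          · have m1 := hxB r i hi1 (hc1.trans hb1)
            have m2 := hxA r' i hi1 (hc2.trans hb2)
            exact far i hiK _ m2 _ m1 (by rw [dist_comm]; exact hi.2)
          · have m1 := hxA r i hi1 (hc1.trans hb1)
            have m2 := hxB r' i hi1 (hc2.trans hb2)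
            exact far i hiK _ m1 _ m2 hi.2
          · rw [hb1, hb2] at hn₀; exact hn₀ rfl
        have hcard : (((Finset.range (NN (j+1))).filter
            (fun i => dist (orb f (p i) (x r)) (orb f (p i) (x r')) < ε)).card : ℝ)
            ≤ (NN j : ℝ) := by
          have := Finset.card_le_card hsub
          rw [Finset.card_range] at this
          exact_mod_cast this
        have hpos : (0:ℝ) < (NN (j+1) : ℝ) := by exact_mod_cast NN_pos (j+1)
        have hle1 : cnt ε (NN (j+1)) ≤ (NN j : ℝ) / (NN (j+1) : ℝ) := by
          rw [hcnt_def]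
          exact div_le_div_of_nonneg_right hcard hpos.le |>.trans_eq rfl
        have hNpos : ((NN j : ℝ)) ≠ 0 := by
          have := NN_pos j; positivity
        have hratio : (NN j : ℝ) / (NN (j+1) : ℝ) = 1 / ((j:ℝ) + 2) := by
          rw [NN_succ j]
          push_cast
          rw [div_eq_div_iff (by positivity) (by positivity)]
          · push_cast; ring
        have hfin : 1 / ((j:ℝ) + 2) ≤ δ := by
          rw [div_le_iff₀ (by positivity)]
          have hj2 : (1:ℝ) / δ < (j:ℝ) + 2 := by
            calc (1:ℝ)/δ < (m0 : ℝ) := hm0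
              _ ≤ (j:ℝ) + 2 := by exact_mod_cast le_trans hjm0 (by omega)
          rw [div_lt_iff₀ hδ] at hj2
          linarith
        calc cnt ε (NN (j+1)) ≤ (NN j : ℝ) / (NN (j+1) : ℝ) := hle1
          _ = 1 / ((j:ℝ) + 2) := hratio
          _ ≤ δ := hfin
    · -- 0 ≤ liminf
      exact le_liminf_of_le ((hbddle ε).isCoboundedUnder_ge)
        (Eventually.of_forall (fun n => h0 ε n))
  · -- phiUpp = 1 for all t > 0
    intro t ht
    rw [phiUpp]
    obtain ⟨Kt, hKt⟩ := eventually_subset hA hAc hIA Metric.isOpen_ball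
      (Metric.mem_ball_self (by positivity : (0:ℝ) < t / 2))
    have close : ∀ k, Kt ≤ k → ∀ u ∈ A k, ∀ v ∈ A k, dist u v < t := by
      intro k hk u hu v hv
      have h1 : dist u a < t / 2 := by
        have := hKt k hk hu; simpa [Metric.mem_ball] using this
      have h2 : dist v a < t / 2 := by
        have := hKt k hk hv; simpa [Metric.mem_ball] using this
      calc dist u v ≤ dist u a + dist a v := dist_triangle u a v
        _ < t := by rw [dist_comm a v]; linarith
    refine le_antisymm ?_ ?_
    · exact limsup_le_of_le ((hbddge t).isCoboundedUnder_le)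
        (Eventually.of_forall (fun n => h1 t n))
    · refine le_of_forall_pos_le_add ?_
      intro δ hδ
      have key : 1 - δ ≤ limsup (cnt t) atTop := by
        refine le_limsup_of_frequently_le ?_ (hbddle t)
        rw [frequently_atTop]
        intro M
        obtain ⟨m0, hm0⟩ := exists_nat_gt (1 / δ)
        set j : ℕ := 2 * (max (max Kt M) m0 + 1) with hjdef
        have hjeven : j % 2 = 0 := by omega
        have hjK : Kt ≤ j := by
          have := le_trans (le_max_left Kt M) (le_max_left _ m0); omega
        have hjM : M ≤ j := by
          have := le_trans (le_max_right Kt M) (le_max_left _ m0); omega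
        have hjm0 : m0 ≤ j := by have := le_max_right (max Kt M) m0; omega
        refine ⟨NN (j + 1), ?_, ?_⟩
        · calc M ≤ j := hjM
            _ ≤ NN (j+1) := le_of_lt (lt_of_le_of_lt (Nat.le_succ j) (lt_NN (j+1)))
        · have hsub : Finset.Ico (NN j) (NN (j+1)) ⊆
              (Finset.range (NN (j+1))).filter
              (fun i => dist (orb f (p i) (x r)) (orb f (p i) (x r')) < t) := by
            intro i hi
            simp only [Finset.mem_Ico] at hi
            simp only [Finset.mem_filter, Finset.mem_range]
            refine ⟨hi.2, ?_⟩
            have hc1 : cseq r i = true := cseq_even hjeven hi.1 hi.2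
            have hc2 : cseq r' i = true := cseq_even hjeven hi.1 hi.2
            have hi1 : 1 ≤ i := le_trans (NN_pos j) hi.1
            have hiK : Kt ≤ i := le_trans hjK (le_trans (le_of_lt (lt_NN j)) hi.1)
            exact close i hiK _ (hxA r i hi1 hc1) _ (hxA r' i hi1 hc2)
          have hNle : NN j ≤ NN (j+1) := le_of_lt (NN_mono (Nat.lt_succ_self j))
          have hcard : ((NN (j+1) : ℝ) - (NN j : ℝ)) ≤
              (((Finset.range (NN (j+1))).filter
              (fun i => dist (orb f (p i) (x r)) (orb f (p i) (x r')) < t)).card : ℝ) := by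
            have := Finset.card_le_card hsub
            rw [Nat.card_Ico] at this
            have h2 : ((NN (j+1) - NN j : ℕ) : ℝ) = (NN (j+1) : ℝ) - (NN j : ℝ) :=
              Nat.cast_sub hNle
            rw [← h2]
            exact_mod_cast this
          have hpos : (0:ℝ) < (NN (j+1) : ℝ) := by exact_mod_cast NN_pos (j+1)
          have hle1 : ((NN (j+1) : ℝ) - (NN j : ℝ)) / (NN (j+1) : ℝ) ≤ cnt t (NN (j+1)) := by
            rw [hcnt_def]
            exact div_le_div_of_nonneg_right hcard hpos.le |>.trans_eq rfl
          have hratio : ((NN (j+1) : ℝ) - (NN j : ℝ)) / (NN (j+1) : ℝ)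
              = 1 - 1 / ((j:ℝ) + 2) := by
            have hj2 : (NN (j+1) : ℝ) = ((j:ℝ) + 2) * (NN j : ℝ) := by
              rw [NN_succ]; push_cast; ring
            have hNj : (NN j : ℝ) ≠ 0 := by have := NN_pos j; positivity
            rw [hj2]
            field_simp
          have hfin : 1 - δ ≤ 1 - 1 / ((j:ℝ) + 2) := by
            have : 1 / ((j:ℝ) + 2) ≤ δ := by
              rw [div_le_iff₀ (by positivity)]
              have hj2 : (1:ℝ) / δ < (j:ℝ) + 2 := by
                calc (1:ℝ)/δ < (m0 : ℝ) := hm0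
                  _ ≤ (j:ℝ) + 2 := by exact_mod_cast le_trans hjm0 (by omega)
              rw [div_lt_iff₀ hδ] at hj2
              linarith
            linarith
          calc (1:ℝ) - δ ≤ 1 - 1 / ((j:ℝ) + 2) := hfin
            _ = ((NN (j+1) : ℝ) - (NN j : ℝ)) / (NN (j+1) : ℝ) := hratio.symm
            _ ≤ cnt t (NN (j+1)) := hle1
      linarith
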